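/- The even predicate rule is non-terminating in context: starting from the goal even(N) ∧ even(s(N)), the rule even(X) ⇔ X = s(Y) | Y = s(Z) ∧ even(Z) admits an infinite computation. Formally, in a transition system where a state is a multiset of atoms even(t) together with accumulated equations over terms, and a transition picks an atom even(t) with the accumulated equations entailing t = s(u) for some term u, replaces it by even(v) and adds the equation u = s(v) for a fresh variable v, the initial state {even(N), even(s(N))} (with empty equations) has an infinite transition sequence. -/
import Mathlib


/-- Terms over the constant 0, the unary constructor s, and countably many variables. -/
inductive Trm : Type
  | zero : Trm
  | s : Trm → Trm
  | var : ℕ → Trm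
deriving DecidableEq

/-- Application of a substitution (homomorphic extension of a variable assignment). -/
def Trm.subst (θ : ℕ → Trm) : Trm → Trm
  | .zero => .zero
  | .s t => .s (t.subst θ)
  | .var n => θ n

/-- The variables occurring in a term. -/
def Trm.vars : Trm → Set ℕ
  | .zero => ∅
  | .s t => t.vars
  | .var n => {n}

/-- A substitution satisfies a set of equations. -/
def Sat (θ : ℕ → Trm) (E : Set (Trm × Trm)) : Prop :=
  ∀ p ∈ E, p.1.subst θ = p.2.subst θ

/-- Entailment of an equation from a set of equations in the free term algebra. -/
def Entails (E : Set (Trm × Trm)) (t u : Trm) : Prop :=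
  ∀ θ : ℕ → Trm, Sat θ E → t.subst θ = u.subst θ

/-- A state: a multiset of atoms even(t), represented by their argument terms, together
with the accumulated equations over terms. -/
abbrev EState := Multiset Trm × Set (Trm × Trm)

/-- One transition for the rule even(X) ⇔ X = s(Y) | Y = s(Z) ∧ even(Z): pick an atom
even(t) with the accumulated equations entailing t = s(u) for some term u, replace it by
even(v) for a fresh variable v and add the equation u = s(v). -/
def EvenStep (s1 s2 : EState) : Prop :=
  ∃ t ∈ s1.1, ∃ u : Trm, Entails s1.2 t (Trm.s u) ∧
    ∃ v : ℕ,
      (∀ a ∈ s1.1, v ∉ a.vars) ∧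
      (∀ p ∈ s1.2, v ∉ p.1.vars ∧ v ∉ p.2.vars) ∧ v ∉ u.vars ∧
      s2 = (s1.1.erase t + {Trm.var v}, insert (u, Trm.s (Trm.var v)) s1.2)

def Eqs (n : ℕ) : Set (Trm × Trm) :=
  {p | ∃ k < n, p = (Trm.var k, Trm.s (Trm.var (k+1)))}

def evenRun : ℕ → EState
  | 0 => (({Trm.var 0, Trm.s (Trm.var 0)} : Multiset Trm), (∅ : Set (Trm × Trm)))
  | n + 1 => (({Trm.var n, Trm.var (n+1)} : Multiset Trm), Eqs (n+1))

/-- the even rule is non-terminating in context: starting from the goal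
even(N) ∧ even(s(N)) (with empty accumulated equations), there is an infinite transition
sequence. -/
theorem even_nonterminating_from_context :
    ∃ f : ℕ → EState,
      f 0 = (({Trm.var 0, Trm.s (Trm.var 0)} : Multiset Trm), (∅ : Set (Trm × Trm))) ∧
      ∀ i : ℕ, EvenStep (f i) (f (i + 1)) := by
  refine ⟨evenRun, rfl, ?_⟩
  intro i
  cases i with
  | zero =>
    refine ⟨Trm.s (Trm.var 0), by simp [evenRun], Trm.var 0, fun θ _ => rfl, 1,
      ?_, ?_, ?_, ?_⟩
    · intro a ha
      simp only [evenRun, Multiset.insert_eq_cons, Multiset.mem_cons,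
        Multiset.mem_singleton] at ha
      rcases ha with rfl | rfl <;> simp [Trm.vars]
    · intro p hp; exact absurd hp (Set.notMem_empty p)
    · simp [Trm.vars]
    · show evenRun 1 = _
      refine Prod.ext ?_ ?_
      · show ({Trm.var 0, Trm.var 1} : Multiset Trm) = _
        rfl
      · show Eqs 1 = insert (Trm.var 0, Trm.s (Trm.var 1)) ∅
        ext p
        simp [Eqs, Nat.lt_one_iff]
  | succ n =>
    refine ⟨Trm.var n, by simp [evenRun], Trm.var (n+1), ?_, n+2, ?_, ?_, ?_, ?_⟩
    · intro θ hθ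
      exact hθ (Trm.var n, Trm.s (Trm.var (n+1))) ⟨n, Nat.lt_succ_self n, rfl⟩
    · intro a ha
      simp only [evenRun, Multiset.insert_eq_cons, Multiset.mem_cons,
        Multiset.mem_singleton] at ha
      rcases ha with rfl | rfl <;> simp [Trm.vars]
    · rintro p ⟨k, hk, rfl⟩
      constructor <;> simp only [Trm.vars, Set.mem_singleton_iff] <;> omega
    · simp only [Trm.vars, Set.mem_singleton_iff]; omega
    · show evenRun (n+2) = _
      refine Prod.ext ?_ ?_
      · show ({Trm.var (n+1), Trm.var (n+2)} : Multiset Trm) =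
          Multiset.erase ({Trm.var n, Trm.var (n+1)} : Multiset Trm) (Trm.var n)
            + {Trm.var (n+2)}
        rw [show ({Trm.var n, Trm.var (n+1)} : Multiset Trm) =
          Trm.var n ::ₘ {Trm.var (n+1)} from rfl, Multiset.erase_cons_head]
        rfl
      · show Eqs (n+2) = insert (Trm.var (n+1), Trm.s (Trm.var (n+2))) (Eqs (n+1))
        ext p
        simp only [Set.mem_insert_iff, Eqs, Set.mem_setOf_eq]
        constructor
        · rintro ⟨k, hk, rfl⟩
          rcases Nat.lt_succ_iff_lt_or_eq.mp hk with h | rfl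
          · exact Or.inr ⟨k, h, rfl⟩
          · exact Or.inl rfl
        · rintro (rfl | ⟨k, hk, rfl⟩)
          · exact ⟨n+1, by omega, rfl⟩
          · exact ⟨k, by omega, rfl⟩
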